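/- arXiv:2508.07503 — 4 statements merged into one kernel-verified Lean document; each statement's English description precedes it below -/
import Mathlib

section
/- Let p > 0 and ε ∈ (0,1). There exists C > 0, independent of ε, such that for all positive φ, ψ ∈ C¹(closure of B_{1/ε}), ‖φ ψ^{3/(p+1)}‖_{L^∞(B_{1/ε})}^{p+2} ≤ C ‖φ‖_{L¹} ‖ψ‖_{L^∞}^{3/(p+1)} ( ‖ψ‖_{L^∞}² ∫ φ^{p−1} ψ φ_x² + ∫ φ^{p+1} ψ ψ_x² + ε^{p+2} ‖φ‖_{L¹}^{p+1} ‖ψ‖_{L^∞}³ ), all norms and integrals over B_{1/ε}. -/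
open MeasureTheory Set
open scoped Interval

private lemma aux_le_essSup {L : ℝ} (hL : 0 < L) {f : ℝ → ℝ}
    (hf : ContinuousOn f (Icc (-L) L)) {x : ℝ} (hx : x ∈ Ioo (-L) L) :
    f x ≤ essSup f (volume.restrict (Ioo (-L) L)) := by
  set μ := volume.restrict (Ioo (-L) L) with hμ
  obtain ⟨z, hz, hzmax⟩ := (isCompact_Icc (a := -L) (b := L)).exists_isMaxOn
    ⟨x, Ioo_subset_Icc_self hx⟩ hf
  have hbdd : Filter.IsBoundedUnder (· ≤ ·) (ae μ) f := by
    refine ⟨f z, ?_⟩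
    simp only [Filter.eventually_map]
    filter_upwards [ae_restrict_mem measurableSet_Ioo] with y hy
    exact hzmax (Ioo_subset_Icc_self hy)
  by_contra h
  push_neg at h
  have hc : ContinuousAt f x := hf.continuousAt (Icc_mem_nhds hx.1 hx.2)
  have hev : ∀ᶠ y in nhds x, essSup f μ < f y := hc (Ioi_mem_nhds h)
  obtain ⟨s, hs, hso, hsx⟩ := eventually_nhds_iff.mp hev
  have hae : ∀ᵐ y ∂μ, f y ≤ essSup f μ := ae_le_essSup hbdd
  have h0 : μ (s ∩ Ioo (-L) L) = 0 :=
    measure_mono_null (fun y hy => not_le.mpr (hs y hy.1)) (ae_iff.mp hae)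
  rw [hμ, Measure.restrict_apply (hso.inter isOpen_Ioo).measurableSet] at h0
  have hpos : 0 < volume ((s ∩ Ioo (-L) L) ∩ Ioo (-L) L) := by
    refine (hso.inter isOpen_Ioo).inter isOpen_Ioo |>.measure_pos volume ⟨x, ⟨hsx, hx⟩, hx⟩
  exact absurd h0 (ne_of_gt hpos)

private lemma aux_le_essSup' {L : ℝ} (hL : 0 < L) {f : ℝ → ℝ}
    (hf : Continuous f) {x : ℝ} (hx : x ∈ Icc (-L) L) :
    f x ≤ essSup f (volume.restrict (Ioo (-L) L)) := by
  have hsub : Ioo (-L) L ⊆ {y | f y ≤ essSup f (volume.restrict (Ioo (-L) L))} :=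
    fun y hy => aux_le_essSup hL hf.continuousOn hy
  have hcl : IsClosed {y | f y ≤ essSup f (volume.restrict (Ioo (-L) L))} :=
    isClosed_le hf continuous_const
  have := closure_minimal hsub hcl
  rw [closure_Ioo (by linarith : -L ≠ L)] at this
  exact this hx

private lemma aux_int {L : ℝ} {f : ℝ → ℝ} (hf : ContinuousOn f (Icc (-L) L)) :
    IntegrableOn f (Ioo (-L) L) volume :=
  (hf.integrableOn_Icc).mono_set Ioo_subset_Icc_self

private lemma aux_memL2 {L : ℝ} (hL : 0 < L) {f : ℝ → ℝ} (hf : ContinuousOn f (Icc (-L) L)) :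
    MemLp f (ENNReal.ofReal 2) (volume.restrict (Ioo (-L) L)) := by
  haveI : IsFiniteMeasure (volume.restrict (Ioo (-L) L)) :=
    ⟨by rw [Measure.restrict_apply_univ]; exact measure_Ioo_lt_top⟩
  obtain ⟨z, hz, hzmax⟩ := (isCompact_Icc (a := -L) (b := L)).exists_isMaxOn
    ⟨-L, left_mem_Icc.mpr (by linarith)⟩ (hf.abs)
  refine MemLp.of_bound
    ((hf.mono Ioo_subset_Icc_self).aestronglyMeasurable measurableSet_Ioo) (|f z|) ?_
  filter_upwards [ae_restrict_mem measurableSet_Ioo] with y hy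
  exact hzmax (Ioo_subset_Icc_self hy)

private lemma aux_cs {L : ℝ} (hL : 0 < L) {f g : ℝ → ℝ}
    (hf : ContinuousOn f (Icc (-L) L)) (hg : ContinuousOn g (Icc (-L) L))
    (hf0 : ∀ x ∈ Ioo (-L) L, 0 ≤ f x) (hg0 : ∀ x ∈ Ioo (-L) L, 0 ≤ g x) :
    ∫ x in Ioo (-L) L, f x * g x ≤
      (∫ x in Ioo (-L) L, f x ^ 2) ^ ((1:ℝ)/2) * (∫ x in Ioo (-L) L, g x ^ 2) ^ ((1:ℝ)/2) := by
  have hpq : Real.HolderConjugate 2 2 := Real.holderConjugate_iff.mpr ⟨one_lt_two, by norm_num⟩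
  have h2 : ∀ y : ℝ, y ^ (2:ℝ) = y ^ 2 := fun y => by
    rw [show (2:ℝ) = ((2:ℕ):ℝ) by norm_num, Real.rpow_natCast]
  have := integral_mul_le_Lp_mul_Lq_of_nonneg hpq
    (f := f) (g := g) (μ := volume.restrict (Ioo (-L) L))
    ?_ ?_ (aux_memL2 hL hf) (aux_memL2 hL hg)
  · simp_rw [h2] at this
    exact this
  · filter_upwards [ae_restrict_mem measurableSet_Ioo] with y hy using hf0 y hy
  · filter_upwards [ae_restrict_mem measurableSet_Ioo] with y hy using hg0 y hy

private lemma rpow_sq {x : ℝ} (hx : 0 ≤ x) (s : ℝ) : (x ^ s) ^ 2 = x ^ (s * 2) := by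
  rw [← Real.rpow_natCast (x ^ s) 2, ← Real.rpow_mul hx]
  norm_num

private lemma aux_absA (p : ℝ) (hp : 0 < p) {G : ℝ} (hG : 0 < G) (d : ℝ) :
    |d * ((p+2)/2) * G ^ ((p+2)/2 - 1)| =
      G ^ ((1:ℝ)/2) * ((p+2)/2 * (G ^ ((p-1)/2) * |d|)) := by
  have h : G ^ ((p+2)/2 - 1) = G ^ ((1:ℝ)/2) * G ^ ((p-1)/2) := by
    rw [← Real.rpow_add hG]; ring_nf
  rw [abs_mul, abs_mul, abs_of_pos (show (0:ℝ) < (p+2)/2 by linarith),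
    abs_of_pos (Real.rpow_pos_of_pos hG _), h]
  ring


private lemma aux_poly (p r M c E1 E2 Cp R2 R1 G D u v a : ℝ)
    (hc : 0 < c) (hcM : c ≤ M)
    (e1 : G^2 = E1*Cp) (c3 : Cp*R2 = c*c*c) (c1 : Cp*R1 = c) (ap : E1*a^2 = E2)
    (hdg : D^2 ≤ 2*(u^2*R2) + 2*(a^2*r^2*R1*v^2))
    (hE1 : 0 ≤ E1) (hE2 : 0 ≤ E2) (hCp : 0 ≤ Cp) :
    ((p+2)/2 * (G*D))^2 ≤ ((p+2)^2/2*(1+r^2)) * (M*M*(E1*c*u^2) + E2*c*v^2) := by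
  have hXn : (0:ℝ) ≤ M * M * (E1 * c * u^2) :=
    mul_nonneg (mul_nonneg (le_trans hc.le hcM) (le_trans hc.le hcM))
      (mul_nonneg (mul_nonneg hE1 hc.le) (sq_nonneg u))
  have hYn : (0:ℝ) ≤ E2 * c * v^2 := mul_nonneg (mul_nonneg hE2 hc.le) (sq_nonneg v)
  have hcc : c * c ≤ M * M := by nlinarith
  have hX : E1 * u^2 * (c*c*c) ≤ M * M * (E1 * c * u^2) := by
    nlinarith [mul_le_mul_of_nonneg_left hcc
      (mul_nonneg (mul_nonneg hE1 (sq_nonneg u)) hc.le)]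
  have key : 2 * (E1 * u^2 * (c*c*c)) + 2 * (r^2 * E2 * c * v^2) ≤
      2 * ((1+r^2) * (M * M * (E1 * c * u^2) + E2 * c * v^2)) := by
    nlinarith [mul_nonneg (sq_nonneg r) hXn, mul_nonneg (sq_nonneg r) hYn]
  calc ((p+2)/2 * (G*D))^2 = ((p+2)/2)^2 * G^2 * D^2 := by ring
    _ = ((p+2)/2)^2 * (E1 * Cp) * D^2 := by rw [e1]
    _ ≤ ((p+2)/2)^2 * (E1 * Cp) * (2 * (u^2 * R2) + 2 * (a^2 * r^2 * R1 * v^2)) :=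
        mul_le_mul_of_nonneg_left hdg
          (mul_nonneg (sq_nonneg _) (mul_nonneg hE1 hCp))
    _ = ((p+2)^2/4) * (2 * (E1 * u^2 * (Cp * R2)) + 2 * (r^2 * (E1 * a^2) * (Cp * R1) * v^2)) := by
        ring
    _ = ((p+2)^2/4) * (2 * (E1 * u^2 * (c*c*c)) + 2 * (r^2 * E2 * c * v^2)) := by
        rw [c3, c1, ap]
    _ ≤ ((p+2)^2/4) * (2 * ((1+r^2) * (M * M * (E1 * c * u^2) + E2 * c * v^2))) :=
        mul_le_mul_of_nonneg_left key (by positivity)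
    _ = ((p+2)^2/2 * (1+r^2)) * (M * M * (E1 * c * u^2) + E2 * c * v^2) := by ring

private lemma aux_ptwise (p r M a c u v : ℝ) (hp : 0 < p) (hr : r = 3/(p+1))
    (ha : 0 < a) (hc : 0 < c) (hcM : c ≤ M) :
    ((p+2)/2 * ((a * c ^ r) ^ ((p-1)/2) * |u * c ^ r + a * (v * r * c ^ (r-1))|)) ^ 2
      ≤ ((p+2)^2/2 * (1+r^2)) *
        (M ^ (2:ℝ) * (a ^ (p-1) * c * u^2) + a ^ (p+1) * c * v^2) := by
  have hp1 : (0:ℝ) < p + 1 := by linarith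
  have hM : 0 < M := lt_of_lt_of_le hc hcM
  have hg : 0 < a * c ^ r := mul_pos ha (Real.rpow_pos_of_pos hc _)
  have hM2 : M ^ (2:ℝ) = M * M := by
    rw [show (2:ℝ) = ((2:ℕ):ℝ) by norm_num, Real.rpow_natCast]; ring
  rw [hM2]
  have e1 : ((a * c ^ r) ^ ((p-1)/2)) ^ 2 = a ^ (p-1) * c ^ (r * (p-1)) := by
    rw [rpow_sq hg.le, Real.mul_rpow ha.le (Real.rpow_pos_of_pos hc _).le,
      ← Real.rpow_mul hc.le]
    ring_nf
  have e2 : (c ^ r) ^ 2 = c ^ (r * 2) := rpow_sq hc.le r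
  have e3 : (c ^ (r-1)) ^ 2 = c ^ ((r-1) * 2) := rpow_sq hc.le (r-1)
  have hdg : |u * c ^ r + a * (v * r * c ^ (r-1))| ^ 2 ≤
      2 * (u^2 * c ^ (r*2)) + 2 * (a^2 * r^2 * c ^ ((r-1)*2) * v^2) := by
    rw [sq_abs, ← e2, ← e3]
    nlinarith [sq_nonneg (u * c ^ r - a * (v * r * c ^ (r-1)))]
  have c3 : c ^ (r * (p-1)) * c ^ (r*2) = c * c * c := by
    rw [← Real.rpow_add hc, show r * (p-1) + r*2 = 3 by rw [hr]; field_simp; ring,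
      show (3:ℝ) = ((3:ℕ):ℝ) by norm_num, Real.rpow_natCast]
    ring
  have c1 : c ^ (r * (p-1)) * c ^ ((r-1)*2) = c := by
    rw [← Real.rpow_add hc, show r * (p-1) + (r-1)*2 = 1 by rw [hr]; field_simp; ring,
      Real.rpow_one]
  have ap : a ^ (p-1) * a ^ 2 = a ^ (p+1) := by
    rw [← Real.rpow_natCast a 2, ← Real.rpow_add ha]
    congr 1
    push_cast
    ring
  exact aux_poly p r M c _ _ _ _ _ _ _ u v a hc hcM e1 c3 c1 ap hdg
    (Real.rpow_pos_of_pos ha _).le (Real.rpow_pos_of_pos ha _).le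
    (Real.rpow_pos_of_pos hc _).le

private lemma aux_ftc {L : ℝ} {w A : ℝ → ℝ}
    (hw : ∀ t ∈ Icc (-L) L, HasDerivAt w (A t) t)
    (hA : ContinuousOn A (Icc (-L) L))
    {x y : ℝ} (hx : x ∈ Icc (-L) L) (hy : y ∈ Icc (-L) L) :
    w x ≤ w y + ∫ t in Ioo (-L) L, |A t| := by
  have hsub : uIcc y x ⊆ Icc (-L) L := uIcc_subset_Icc hy hx
  have hint : IntervalIntegrable A volume y x := (hA.mono hsub).intervalIntegrable
  have heq : ∫ t in y..x, A t = w x - w y :=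
    intervalIntegral.integral_eq_sub_of_hasDerivAt (fun t ht => hw t (hsub ht)) hint
  have h1 : w x - w y ≤ |∫ t in y..x, A t| := by
    rw [heq] at *
    exact le_abs_self _
  have h2 : |∫ t in y..x, A t| ≤ ∫ t in Ι y x, |A t| := by
    simpa using intervalIntegral.norm_integral_le_integral_norm_uIoc (f := A) (a := y) (b := x)
  have hsub2 : Ι y x ⊆ Icc (-L) L := (uIoc_subset_uIcc).trans hsub
  have hAi : IntegrableOn (fun t => |A t|) (Icc (-L) L) volume :=
    (hA.abs).integrableOn_Icc
  have h3 : ∫ t in Ι y x, |A t| ≤ ∫ t in Icc (-L) L, |A t| := by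
    apply setIntegral_mono_set hAi
    · filter_upwards with t using abs_nonneg _
    · exact HasSubset.Subset.eventuallyLE hsub2
  have h4 : ∫ t in Icc (-L) L, |A t| = ∫ t in Ioo (-L) L, |A t| :=
    integral_Icc_eq_integral_Ioo
  linarith

private lemma aux_essSup_le {μ : Measure ℝ} [(ae μ).NeBot] {f : ℝ → ℝ} {c : ℝ}
    (hlow : ∀ᵐ t ∂μ, 0 ≤ f t) (hev : ∀ᵐ t ∂μ, f t ≤ c) : essSup f μ ≤ c :=
  Filter.limsup_le_of_le (Filter.isCoboundedUnder_le_of_eventually_le _ hlow) hev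

set_option maxHeartbeats 1000000 in
/-- The key `L^∞` estimate of Lemma 3.2: for positive `C¹` functions `φ, ψ` on
`B_{1/ε} = (-1/ε, 1/ε)`, the quantity `‖φ ψ^{3/(p+1)}‖_∞^{p+2}` is controlled by
the indicated integral quantities, with a constant independent of `ε`. -/
theorem stmt_3 (p : ℝ) (hp : 0 < p) :
    ∃ C > 0, ∀ ε ∈ Set.Ioo (0:ℝ) 1, ∀ φ ψ : ℝ → ℝ,
      ContDiff ℝ 1 φ → ContDiff ℝ 1 ψ →
      (∀ x ∈ Set.Icc (-(1/ε)) (1/ε), 0 < φ x) →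
      (∀ x ∈ Set.Icc (-(1/ε)) (1/ε), 0 < ψ x) →
      (essSup (fun x => φ x * ψ x ^ (3/(p+1)))
          (volume.restrict (Set.Ioo (-(1/ε)) (1/ε)))) ^ (p+2) ≤
        C * (∫ x in Set.Ioo (-(1/ε)) (1/ε), φ x) *
          (essSup ψ (volume.restrict (Set.Ioo (-(1/ε)) (1/ε)))) ^ (3/(p+1)) *
          ((essSup ψ (volume.restrict (Set.Ioo (-(1/ε)) (1/ε)))) ^ (2:ℝ) *
              (∫ x in Set.Ioo (-(1/ε)) (1/ε),
                φ x ^ (p-1) * ψ x * (deriv φ x) ^ 2)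
            + (∫ x in Set.Ioo (-(1/ε)) (1/ε),
                φ x ^ (p+1) * ψ x * (deriv ψ x) ^ 2)
            + ε ^ (p+2) * (∫ x in Set.Ioo (-(1/ε)) (1/ε), φ x) ^ (p+1) *
              (essSup ψ (volume.restrict (Set.Ioo (-(1/ε)) (1/ε)))) ^ (3:ℝ)) := by
  have hp1 : (0:ℝ) < p + 1 := by linarith
  refine ⟨(p+2)^2 * (1 + (3/(p+1))^2) + 1, by positivity, ?_⟩
  intro ε hε φ ψ hφ hψ hφpos hψpos
  obtain ⟨hε0, hε1⟩ := hε
  set L : ℝ := 1/ε with hLdef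
  have hL : 0 < L := by positivity
  have hεL : ε * L = 1 := by rw [hLdef]; field_simp
  set r : ℝ := 3/(p+1) with hrdef
  have hr0 : 0 < r := by rw [hrdef]; positivity
  have h0Icc : (0:ℝ) ∈ Icc (-L) L := ⟨by linarith, by linarith⟩
  have h0Ioo : (0:ℝ) ∈ Ioo (-L) L := ⟨by linarith, by linarith⟩
  -- continuity and differentiability
  have hφc : Continuous φ := hφ.continuous
  have hψc : Continuous ψ := hψ.continuous
  have hφd : Differentiable ℝ φ := hφ.differentiable one_ne_zero
  have hψd : Differentiable ℝ ψ := hψ.differentiable one_ne_zero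
  have hφ' : Continuous (deriv φ) := hφ.continuous_deriv le_rfl
  have hψ' : Continuous (deriv ψ) := hψ.continuous_deriv le_rfl
  set g : ℝ → ℝ := fun x => φ x * ψ x ^ r with hgdef
  have hψrc : ContinuousOn (fun x => ψ x ^ r) (Icc (-L) L) :=
    hψc.continuousOn.rpow_const (fun x hx => Or.inl (hψpos x hx).ne')
  have hψr1c : ContinuousOn (fun x => ψ x ^ (r-1)) (Icc (-L) L) :=
    hψc.continuousOn.rpow_const (fun x hx => Or.inl (hψpos x hx).ne')
  have hgc : ContinuousOn g (Icc (-L) L) := hφc.continuousOn.mul hψrc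
  have hgpos : ∀ x ∈ Icc (-L) L, 0 < g x := fun x hx =>
    mul_pos (hφpos x hx) (Real.rpow_pos_of_pos (hψpos x hx) _)
  set S := essSup g (volume.restrict (Ioo (-L) L)) with hSdef
  set M := essSup ψ (volume.restrict (Ioo (-L) L)) with hMdef
  -- bounds on M
  have hMle : ∀ x ∈ Icc (-L) L, ψ x ≤ M := by
    rw [hMdef]
    exact fun x hx => aux_le_essSup' hL hψc hx
  have hM0 : 0 < M := lt_of_lt_of_le (hψpos 0 h0Icc) (hMle 0 h0Icc)
  -- max and min of g
  obtain ⟨x₀, hx₀, hx₀max⟩ := (isCompact_Icc (a := -L) (b := L)).exists_isMaxOn ⟨0, h0Icc⟩ hgc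
  obtain ⟨y₀, hy₀, hy₀min⟩ := (isCompact_Icc (a := -L) (b := L)).exists_isMinOn ⟨0, h0Icc⟩ hgc
  haveI hne : (ae (volume.restrict (Ioo (-L) L))).NeBot := by
    rw [ae_neBot, Ne, Measure.restrict_eq_zero, Real.volume_Ioo]
    simp only [ENNReal.ofReal_eq_zero, not_le]
    linarith
  have hSle : S ≤ g x₀ := by
    have hev : ∀ᵐ t ∂(volume.restrict (Ioo (-L) L)), g t ≤ g x₀ := by
      filter_upwards [ae_restrict_mem measurableSet_Ioo] with t ht
      exact hx₀max (Ioo_subset_Icc_self ht)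
    have hlow : ∀ᵐ t ∂(volume.restrict (Ioo (-L) L)), 0 ≤ g t := by
      filter_upwards [ae_restrict_mem measurableSet_Ioo] with t ht
      exact (hgpos t (Ioo_subset_Icc_self ht)).le
    rw [hSdef]
    exact aux_essSup_le hlow hev
  have hS0 : 0 ≤ S := by
    rw [hSdef]
    exact le_trans (hgpos 0 h0Icc).le (aux_le_essSup hL hgc h0Ioo)
  -- integrals
  set N := ∫ x in Ioo (-L) L, g x with hNdef
  set F := ∫ x in Ioo (-L) L, φ x with hFdef
  set I1 := ∫ x in Ioo (-L) L, φ x ^ (p-1) * ψ x * (deriv φ x) ^ 2 with hI1def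
  set I2 := ∫ x in Ioo (-L) L, φ x ^ (p+1) * ψ x * (deriv ψ x) ^ 2 with hI2def
  have hgint : IntegrableOn g (Ioo (-L) L) volume := aux_int hgc
  have hN0 : 0 ≤ N := setIntegral_nonneg measurableSet_Ioo
    (fun x hx => (hgpos x (Ioo_subset_Icc_self hx)).le)
  have hF0 : 0 ≤ F := setIntegral_nonneg measurableSet_Ioo
    (fun x hx => (hφpos x (Ioo_subset_Icc_self hx)).le)
  have hI10 : 0 ≤ I1 := setIntegral_nonneg measurableSet_Ioo (fun x hx =>
    mul_nonneg (mul_nonneg (Real.rpow_pos_of_pos (hφpos x (Ioo_subset_Icc_self hx)) _).le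
      (hψpos x (Ioo_subset_Icc_self hx)).le) (sq_nonneg _))
  have hI20 : 0 ≤ I2 := setIntegral_nonneg measurableSet_Ioo (fun x hx =>
    mul_nonneg (mul_nonneg (Real.rpow_pos_of_pos (hφpos x (Ioo_subset_Icc_self hx)) _).le
      (hψpos x (Ioo_subset_Icc_self hx)).le) (sq_nonneg _))
  -- min of g controls N
  have hvol : (volume (Ioo (-L) L)).toReal = 2*L := by
    rw [Real.volume_Ioo, ENNReal.toReal_ofReal (by linarith)]; ring
  have hminint : g y₀ * (2*L) ≤ N := by
    have h1 : ∫ _x in Ioo (-L) L, g y₀ ≤ N := by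
      refine setIntegral_mono_on (integrableOn_const measure_Ioo_lt_top.ne) hgint
        measurableSet_Ioo (fun x hx => hy₀min (Ioo_subset_Icc_self hx))
    rwa [setIntegral_const, smul_eq_mul, measureReal_def, hvol, mul_comm] at h1
  have hgy₀ : g y₀ ≤ ε * N / 2 := by
    have h1 : ε * (g y₀ * (2*L)) ≤ ε * N := mul_le_mul_of_nonneg_left hminint hε0.le
    have h2 : ε * (g y₀ * (2*L)) = 2 * g y₀ * (ε * L) := by ring
    rw [h2, hεL] at h1
    linarith only [h1]
  -- derivatives
  set dg : ℝ → ℝ := fun t => deriv φ t * ψ t ^ r + φ t * (deriv ψ t * r * ψ t ^ (r-1))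
    with hdgdef
  have hgderiv : ∀ t ∈ Icc (-L) L, HasDerivAt g (dg t) t := by
    intro t ht
    have h1 : HasDerivAt (fun y => ψ y ^ r) (deriv ψ t * r * ψ t ^ (r-1)) t :=
      (hψd t).hasDerivAt.rpow_const (Or.inl (hψpos t ht).ne')
    exact ((hφd t).hasDerivAt.mul h1)
  set w : ℝ → ℝ := fun s => g s ^ ((p+2)/2) with hwdef
  set A : ℝ → ℝ := fun t => dg t * ((p+2)/2) * g t ^ ((p+2)/2 - 1) with hAdef
  have hwderiv : ∀ t ∈ Icc (-L) L, HasDerivAt w (A t) t := fun t ht =>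
    (hgderiv t ht).rpow_const (Or.inl (hgpos t ht).ne')
  have hdgc : ContinuousOn dg (Icc (-L) L) :=
    (hφ'.continuousOn.mul hψrc).add
      (hφc.continuousOn.mul ((hψ'.continuousOn.mul continuousOn_const).mul hψr1c))
  have hAc : ContinuousOn A (Icc (-L) L) :=
    (hdgc.mul continuousOn_const).mul
      (hgc.rpow_const fun x hx => Or.inl (hgpos x hx).ne')
  set J := ∫ t in Ioo (-L) L, |A t| with hJdef
  have hwx : w x₀ ≤ w y₀ + J := aux_ftc hwderiv hAc hx₀ hy₀
  have hwx0 : 0 ≤ w x₀ := Real.rpow_nonneg (hgpos x₀ hx₀).le _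
  have hwy0 : 0 ≤ w y₀ := Real.rpow_nonneg (hgpos y₀ hy₀).le _
  have hJ0 : 0 ≤ J := setIntegral_nonneg measurableSet_Ioo (fun x _ => abs_nonneg _)
  -- Cauchy-Schwarz
  set f1 : ℝ → ℝ := fun t => g t ^ ((1:ℝ)/2) with hf1def
  set b : ℝ → ℝ := fun t => (p+2)/2 * (g t ^ ((p-1)/2) * |dg t|) with hbdef
  have hJeq : J = ∫ t in Ioo (-L) L, f1 t * b t := by
    refine setIntegral_congr_fun measurableSet_Ioo (fun t ht => ?_)
    exact aux_absA p hp (hgpos t (Ioo_subset_Icc_self ht)) (dg t)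
  have hf1c : ContinuousOn f1 (Icc (-L) L) :=
    hgc.rpow_const fun x hx => Or.inl (hgpos x hx).ne'
  have hbc : ContinuousOn b (Icc (-L) L) :=
    continuousOn_const.mul ((hgc.rpow_const fun x hx => Or.inl (hgpos x hx).ne').mul hdgc.abs)
  set D2 := ∫ t in Ioo (-L) L, b t ^ 2 with hD2def
  have hD20 : 0 ≤ D2 := setIntegral_nonneg measurableSet_Ioo (fun x _ => sq_nonneg _)
  have hf1sq : ∫ t in Ioo (-L) L, f1 t ^ 2 = N := by
    refine setIntegral_congr_fun measurableSet_Ioo (fun t ht => ?_)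
    rw [hf1def]
    rw [rpow_sq (hgpos t (Ioo_subset_Icc_self ht)).le, show (1:ℝ)/2*2 = 1 by ring,
      Real.rpow_one]
  have hCS : J ≤ N ^ ((1:ℝ)/2) * D2 ^ ((1:ℝ)/2) := by
    rw [hJeq, ← hf1sq]
    refine aux_cs hL hf1c hbc (fun x hx => Real.rpow_nonneg
        (hgpos x (Ioo_subset_Icc_self hx)).le _)
      (fun x hx => mul_nonneg (by linarith)
        (mul_nonneg (Real.rpow_nonneg (hgpos x (Ioo_subset_Icc_self hx)).le _) (abs_nonneg _)))
  have hJsq : J^2 ≤ N * D2 := by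
    have hNs : (N ^ ((1:ℝ)/2))^2 = N := by
      rw [rpow_sq hN0, show (1:ℝ)/2*2 = 1 by ring, Real.rpow_one]
    have hDs : (D2 ^ ((1:ℝ)/2))^2 = D2 := by
      rw [rpow_sq hD20, show (1:ℝ)/2*2 = 1 by ring, Real.rpow_one]
    calc J^2 ≤ (N ^ ((1:ℝ)/2) * D2 ^ ((1:ℝ)/2))^2 := by
          exact pow_le_pow_left₀ hJ0 hCS 2
      _ = N * D2 := by rw [mul_pow, hNs, hDs]
  -- bound D2
  set K1 := (p+2)^2/2 * (1+r^2) with hK1def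
  have hK10 : 0 ≤ K1 := by rw [hK1def]; positivity
  have hD2le : D2 ≤ K1 * (M ^ (2:ℝ) * I1 + I2) := by
    have hi1c : ContinuousOn (fun x => φ x ^ (p-1) * ψ x * (deriv φ x) ^ 2) (Icc (-L) L) :=
      ((hφc.continuousOn.rpow_const fun x hx => Or.inl (hφpos x hx).ne').mul
        hψc.continuousOn).mul (hφ'.continuousOn.pow 2)
    have hi2c : ContinuousOn (fun x => φ x ^ (p+1) * ψ x * (deriv ψ x) ^ 2) (Icc (-L) L) :=
      ((hφc.continuousOn.rpow_const fun x hx => Or.inl (hφpos x hx).ne').mul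
        hψc.continuousOn).mul (hψ'.continuousOn.pow 2)
    have hmono : D2 ≤ ∫ t in Ioo (-L) L,
        K1 * (M ^ (2:ℝ) * (φ t ^ (p-1) * ψ t * (deriv φ t) ^ 2)
          + φ t ^ (p+1) * ψ t * (deriv ψ t) ^ 2) := by
      refine setIntegral_mono_on (aux_int (hbc.pow 2))
        (aux_int (continuousOn_const.mul ((continuousOn_const.mul hi1c).add hi2c)))
        measurableSet_Ioo (fun t ht => ?_)
      have ht' := Ioo_subset_Icc_self ht
      exact aux_ptwise p r M (φ t) (ψ t) (deriv φ t) (deriv ψ t) hp hrdef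
        (hφpos t ht') (hψpos t ht') (hMle t ht')
    calc D2 ≤ _ := hmono
      _ = K1 * (M ^ (2:ℝ) * I1 + I2) := by
        rw [integral_const_mul]
        congr 1
        rw [integral_add (Integrable.const_mul (aux_int hi1c) _) (aux_int hi2c),
          integral_const_mul]
  -- bound N
  have hMr0 : (0:ℝ) ≤ M ^ r := (Real.rpow_pos_of_pos hM0 _).le
  have hNle : N ≤ F * M ^ r := by
    have h1 : N ≤ ∫ x in Ioo (-L) L, φ x * M ^ r := by
      refine setIntegral_mono_on hgint (Integrable.mul_const (aux_int hφc.continuousOn) _)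
        measurableSet_Ioo (fun x hx => ?_)
      have hx' := Ioo_subset_Icc_self hx
      exact mul_le_mul_of_nonneg_left
        (Real.rpow_le_rpow (hψpos x hx').le (hMle x hx') hr0.le) (hφpos x hx').le
    rwa [integral_mul_const] at h1
  have hNp1 : N ^ (p+1) ≤ F ^ (p+1) * M ^ (3:ℝ) := by
    calc N ^ (p+1) ≤ (F * M ^ r) ^ (p+1) := Real.rpow_le_rpow hN0 hNle (by linarith)
      _ = F ^ (p+1) * (M ^ r) ^ (p+1) := Real.mul_rpow hF0 hMr0
      _ = F ^ (p+1) * M ^ (3:ℝ) := by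
        rw [← Real.rpow_mul hM0.le, show r * (p+1) = 3 by rw [hrdef]; field_simp]
  -- squares of w
  have hwy₀sq : w y₀ ^ 2 = g y₀ ^ (p+2) := by
    rw [hwdef]
    rw [rpow_sq (hgpos y₀ hy₀).le, show (p+2)/2*2 = p+2 by ring]
  have hwx₀sq : w x₀ ^ 2 = g x₀ ^ (p+2) := by
    rw [hwdef]
    rw [rpow_sq (hgpos x₀ hx₀).le, show (p+2)/2*2 = p+2 by ring]
  have hgy₀sq : g y₀ ^ (p+2) ≤ (ε * N / 2) ^ (p+2) :=
    Real.rpow_le_rpow (hgpos y₀ hy₀).le hgy₀ (by linarith)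
  -- key numeric bound: 2 * (ε N / 2)^{p+2} ≤ ε^{p+2} N^{p+2}
  have hεN2 : 2 * (ε * N / 2) ^ (p+2) ≤ ε ^ (p+2) * N ^ (p+2) := by
    have he : (ε * N / 2) ^ (p+2) = ε ^ (p+2) * N ^ (p+2) / 2 ^ (p+2) := by
      rw [Real.div_rpow (by positivity) (by norm_num), Real.mul_rpow hε0.le hN0]
    rw [he]
    have h2p : (2:ℝ) ≤ 2 ^ (p+2) := by
      calc (2:ℝ) = 2 ^ (1:ℝ) := (Real.rpow_one 2).symm
        _ ≤ 2 ^ (p+2) := Real.rpow_le_rpow_of_exponent_le (by norm_num) (by linarith)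
    have hX0 : (0:ℝ) ≤ ε ^ (p+2) * N ^ (p+2) := by positivity
    rw [mul_div_assoc', div_le_iff₀ (by positivity : (0:ℝ) < 2 ^ (p+2))]
    have h3 := mul_le_mul_of_nonneg_left h2p hX0
    linarith only [h3]
  have hNsplit : N ^ (p+2) = N * N ^ (p+1) := by
    rw [show p+2 = 1+(p+1) by ring, Real.rpow_add' hN0 (by intro h; linarith), Real.rpow_one]
  -- final chain
  have hmain : S ^ (p+2) ≤
      F * M ^ r * (ε ^ (p+2) * (F ^ (p+1) * M ^ (3:ℝ)) + 2 * (K1 * (M ^ (2:ℝ) * I1 + I2))) := by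
    have c1 : S ^ (p+2) ≤ g x₀ ^ (p+2) := Real.rpow_le_rpow hS0 hSle (by linarith)
    have c2 : g x₀ ^ (p+2) ≤ 2 * (w y₀)^2 + 2 * J^2 := by
      rw [← hwx₀sq]
      nlinarith only [sq_nonneg (w y₀ - J), hwx, hwx0, hwy0, hJ0]
    have c3 : 2 * (w y₀)^2 + 2 * J^2 ≤ ε ^ (p+2) * N ^ (p+2) + 2 * (N * D2) := by
      rw [hwy₀sq]
      linarith only [hgy₀sq, hεN2, hJsq]
    have c4 : ε ^ (p+2) * N ^ (p+2) ≤ ε ^ (p+2) * ((F * M ^ r) * (F ^ (p+1) * M ^ (3:ℝ))) := by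
      rw [hNsplit]
      refine mul_le_mul_of_nonneg_left ?_ (by positivity)
      exact mul_le_mul hNle hNp1 (Real.rpow_nonneg hN0 _) (by positivity)
    have c5 : 2 * (N * D2) ≤ 2 * ((F * M ^ r) * (K1 * (M ^ (2:ℝ) * I1 + I2))) := by
      have hrhs0 : 0 ≤ K1 * (M ^ (2:ℝ) * I1 + I2) := by
        refine mul_nonneg hK10 (add_nonneg (mul_nonneg ?_ hI10) hI20)
        positivity
      refine mul_le_mul_of_nonneg_left ?_ (by norm_num)
      exact mul_le_mul hNle (hD2le) hD20 (mul_nonneg hF0 hMr0)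
    linarith only [c1, c2, c3, c4, c5]
  -- rearrange to the target constant
  have hY0 : 0 ≤ M ^ (2:ℝ) * I1 + I2 := add_nonneg (mul_nonneg (by positivity) hI10) hI20
  have hZ0 : 0 ≤ ε ^ (p+2) * F ^ (p+1) * M ^ (3:ℝ) := by positivity
  have hP0 : 0 ≤ F * M ^ r := mul_nonneg hF0 hMr0
  calc S ^ (p+2) ≤ _ := hmain
    _ ≤ (2*K1+1) * (F * M ^ r) *
        (M ^ (2:ℝ) * I1 + I2 + ε ^ (p+2) * F ^ (p+1) * M ^ (3:ℝ)) := by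
      nlinarith only [mul_nonneg hP0 hY0, mul_nonneg hK10 (mul_nonneg hP0 hZ0), hmain, hK10, hP0, hY0, hZ0]
    _ = ((p+2)^2 * (1 + r^2) + 1) * F * M ^ r *
        (M ^ (2:ℝ) * I1 + I2 + ε ^ (p+2) * F ^ (p+1) * M ^ (3:ℝ)) := by
      rw [hK1def]; ring
end

section
/- Let I be a bounded interval and v ∈ C²(closure I) positive with v_x = 0 on ∂I. Then ∫_I v_xx²/v ≥ (4/9) ∫_I v_x⁴/v³. -/
open MeasureTheory

/-- For `v ∈ C²([a,b])` positive with homogeneous Neumann boundary conditions,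
`∫ v_xx²/v ≥ (4/9) ∫ v_x⁴/v³`. -/
theorem stmt_14 (a b : ℝ) (hab : a < b) (v v' v'' : ℝ → ℝ)
    (hv : ∀ x ∈ Set.Icc a b, HasDerivAt v (v' x) x)
    (hv' : ∀ x ∈ Set.Icc a b, HasDerivAt v' (v'' x) x)
    (hv''c : ContinuousOn v'' (Set.Icc a b))
    (hvpos : ∀ x ∈ Set.Icc a b, 0 < v x)
    (hNa : v' a = 0) (hNb : v' b = 0) :
    (4/9) * (∫ x in Set.Ioo a b, (v' x) ^ 4 / (v x) ^ 3) ≤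
      ∫ x in Set.Ioo a b, (v'' x) ^ 2 / v x := by
  have hvC : ContinuousOn v (Set.Icc a b) := fun x hx =>
    (hv x hx).continuousAt.continuousWithinAt
  have hv'C : ContinuousOn v' (Set.Icc a b) := fun x hx =>
    (hv' x hx).continuousAt.continuousWithinAt
  have hvne : ∀ x ∈ Set.Icc a b, v x ≠ 0 := fun x hx => (hvpos x hx).ne'
  -- the three integrands
  set f1 : ℝ → ℝ := fun x => (v'' x) ^ 2 / v x with hf1
  set f2 : ℝ → ℝ := fun x => (v' x) ^ 2 * v'' x / (v x) ^ 2 with hf2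
  set f3 : ℝ → ℝ := fun x => (v' x) ^ 4 / (v x) ^ 3 with hf3
  have hf1C : ContinuousOn f1 (Set.Icc a b) := (hv''c.pow 2).div hvC hvne
  have hf2C : ContinuousOn f2 (Set.Icc a b) :=
    ((hv'C.pow 2).mul hv''c).div (hvC.pow 2) (fun x hx => pow_ne_zero 2 (hvne x hx))
  have hf3C : ContinuousOn f3 (Set.Icc a b) :=
    (hv'C.pow 4).div (hvC.pow 3) (fun x hx => pow_ne_zero 3 (hvne x hx))
  have hI1 : IntegrableOn f1 (Set.Ioo a b) :=
    (hf1C.integrableOn_Icc).mono_set Set.Ioo_subset_Icc_self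
  have hI2 : IntegrableOn f2 (Set.Ioo a b) :=
    (hf2C.integrableOn_Icc).mono_set Set.Ioo_subset_Icc_self
  have hI3 : IntegrableOn f3 (Set.Ioo a b) :=
    (hf3C.integrableOn_Icc).mono_set Set.Ioo_subset_Icc_self
  set F : ℝ := ∫ x in Set.Ioo a b, f1 x with hF
  set P : ℝ := ∫ x in Set.Ioo a b, f2 x with hP
  set A : ℝ := ∫ x in Set.Ioo a b, f3 x with hA
  -- integration by parts : 3P - 2A = 0
  have hder : ∀ x ∈ Set.uIcc a b,
      HasDerivAt (fun x => (v' x) ^ 3 / (v x) ^ 2) (3 * f2 x - 2 * f3 x) x := by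
    rw [Set.uIcc_of_le hab.le]
    intro x hx
    have h := ((hv' x hx).pow 3).div ((hv x hx).pow 2) (pow_ne_zero 2 (hvne x hx))
    convert h using 1
    any_goals rfl
    have hv0 : v x ≠ 0 := hvne x hx
    simp only [hf2, hf3, Pi.pow_apply]
    field_simp
    ring
  have hdC : ContinuousOn (fun x => 3 * f2 x - 2 * f3 x) (Set.uIcc a b) := by
    rw [Set.uIcc_of_le hab.le]
    exact ((continuousOn_const.mul hf2C).sub (continuousOn_const.mul hf3C))
  have hIBP := intervalIntegral.integral_eq_sub_of_hasDerivAt hder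
    (hdC.intervalIntegrable)
  rw [hNa, hNb] at hIBP
  norm_num at hIBP
  rw [intervalIntegral.integral_of_le hab.le,
    MeasureTheory.integral_Ioc_eq_integral_Ioo] at hIBP
  have hsplit : (∫ x in Set.Ioo a b, (3 * f2 x - 2 * f3 x)) = 3 * P - 2 * A := by
    rw [MeasureTheory.integral_sub (hI2.const_mul 3) (hI3.const_mul 2),
      MeasureTheory.integral_const_mul, MeasureTheory.integral_const_mul]
  rw [hsplit] at hIBP
  have hPA : P = 2 / 3 * A := by linarith [hIBP]
  -- nonnegativity of A and F
  have hAnn : 0 ≤ A := setIntegral_nonneg measurableSet_Ioo (fun x hx => by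
    have := hvpos x (Set.Ioo_subset_Icc_self hx)
    positivity)
  have hFnn : 0 ≤ F := setIntegral_nonneg measurableSet_Ioo (fun x hx => by
    have := hvpos x (Set.Ioo_subset_Icc_self hx)
    positivity)
  rcases eq_or_lt_of_le hAnn with hA0 | hApos
  · rw [hA, ← hA0] at *
    simpa using hFnn
  · -- Cauchy-Schwarz via the discriminant trick with t = P / A
    set t : ℝ := P / A with ht
    have hquad : 0 ≤ ∫ x in Set.Ioo a b, (f1 x - 2 * t * f2 x + t ^ 2 * f3 x) := by
      apply setIntegral_nonneg measurableSet_Ioo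
      intro x hx
      have hvx := hvpos x (Set.Ioo_subset_Icc_self hx)
      have key : f1 x - 2 * t * f2 x + t ^ 2 * f3 x
          = (v'' x * v x - t * (v' x) ^ 2) ^ 2 / (v x) ^ 3 := by
        simp only [hf1, hf2, hf3]
        field_simp
        ring
      rw [key]
      positivity
    have hsplit2 : (∫ x in Set.Ioo a b, (f1 x - 2 * t * f2 x + t ^ 2 * f3 x))
        = F - 2 * t * P + t ^ 2 * A := by
      have hIsub : IntegrableOn (fun x => f1 x - 2 * t * f2 x) (Set.Ioo a b) :=
        hI1.sub (hI2.const_mul (2 * t))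
      rw [MeasureTheory.integral_add hIsub (hI3.const_mul (t ^ 2)),
        MeasureTheory.integral_sub hI1 (hI2.const_mul (2 * t)),
        MeasureTheory.integral_const_mul, MeasureTheory.integral_const_mul]
    rw [hsplit2] at hquad
    have ht2 : t * A = P := div_mul_cancel₀ P hApos.ne'
    have hPsq : P ^ 2 ≤ F * A := by
      have : 0 ≤ F - P ^ 2 / A := by
        have : t ^ 2 * A = P ^ 2 / A := by
          rw [ht]; field_simp
        nlinarith [hquad, ht2]
      have := (div_le_iff₀ hApos).mp (by linarith : P ^ 2 / A ≤ F)
      linarith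
    rw [hPA] at hPsq
    nlinarith [hApos]
end

section
/- Let I be a bounded interval, u ∈ C¹(closure I) nonnegative, v ∈ C¹(closure I) positive, φ ∈ C¹_c(I) with 0 ≤ φ ≤ 1, and p ≥ 2. Then ( ∫_I |(u^{(p+1)/2} v)_x| φ² )² ≤ ((p+1)²/2) (∫_I v φ²)(∫_I u^{p−1} v u_x² φ²) + 2 (∫_I u^p v φ²)(∫_I (u/v) v_x² φ²). -/
open MeasureTheory

lemma memL2_of_continuousOn' {a b : ℝ} {f : ℝ → ℝ}
    (hf : ContinuousOn f (Set.Icc a b)) :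
    MemLp f 2 (volume.restrict (Set.Ioo a b)) := by
  obtain ⟨C, hC⟩ := (isCompact_Icc (a := a) (b := b)).exists_bound_of_continuousOn hf
  have hmeas : AEStronglyMeasurable f (volume.restrict (Set.Ioo a b)) :=
    (hf.mono Set.Ioo_subset_Icc_self).aestronglyMeasurable measurableSet_Ioo
  haveI : IsFiniteMeasure (volume.restrict (Set.Ioo a b)) := by
    constructor
    simp [Real.volume_Ioo]
  refine MemLp.of_bound hmeas C ?_
  filter_upwards [ae_restrict_mem measurableSet_Ioo] with x hx
  exact hC x (Set.Ioo_subset_Icc_self hx)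

lemma intOn_of_continuousOn' {a b : ℝ} {f : ℝ → ℝ}
    (hf : ContinuousOn f (Set.Icc a b)) :
    IntegrableOn f (Set.Ioo a b) :=
  (hf.integrableOn_Icc).mono_set Set.Ioo_subset_Icc_self

lemma cs_sq' {a b : ℝ} {f g : ℝ → ℝ}
    (hf : ContinuousOn f (Set.Icc a b)) (hg : ContinuousOn g (Set.Icc a b))
    (hf0 : ∀ x ∈ Set.Icc a b, 0 ≤ f x) (hg0 : ∀ x ∈ Set.Icc a b, 0 ≤ g x) :
    (∫ x in Set.Ioo a b, f x * g x) ^ 2 ≤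
      (∫ x in Set.Ioo a b, f x ^ 2) * (∫ x in Set.Ioo a b, g x ^ 2) := by
  have hpq : Real.HolderConjugate 2 2 := Real.HolderConjugate.two_two
  have h2 : ENNReal.ofReal (2:ℝ) = 2 := by norm_num
  have hf0' : 0 ≤ᵐ[volume.restrict (Set.Ioo a b)] f := by
    filter_upwards [ae_restrict_mem measurableSet_Ioo] with x hx
    exact hf0 x (Set.Ioo_subset_Icc_self hx)
  have hg0' : 0 ≤ᵐ[volume.restrict (Set.Ioo a b)] g := by
    filter_upwards [ae_restrict_mem measurableSet_Ioo] with x hx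
    exact hg0 x (Set.Ioo_subset_Icc_self hx)
  have h := integral_mul_le_Lp_mul_Lq_of_nonneg hpq hf0' hg0'
    (h2 ▸ memL2_of_continuousOn' hf) (h2 ▸ memL2_of_continuousOn' hg)
  simp only [show (2:ℝ) = ((2:ℕ):ℝ) by norm_num, Real.rpow_natCast] at h
  have hfg0 : 0 ≤ ∫ x in Set.Ioo a b, f x * g x := by
    refine integral_nonneg_of_ae ?_
    filter_upwards [hf0', hg0'] with x h1 h2 using mul_nonneg h1 h2
  have hF0 : 0 ≤ ∫ x in Set.Ioo a b, f x ^ 2 := integral_nonneg fun x => sq_nonneg _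
  have hG0 : 0 ≤ ∫ x in Set.Ioo a b, g x ^ 2 := integral_nonneg fun x => sq_nonneg _
  calc (∫ x in Set.Ioo a b, f x * g x) ^ 2
      ≤ ((∫ x in Set.Ioo a b, f x ^ 2) ^ ((1:ℝ)/((2:ℕ):ℝ)) *
          (∫ x in Set.Ioo a b, g x ^ 2) ^ ((1:ℝ)/((2:ℕ):ℝ))) ^ 2 :=
        pow_le_pow_left₀ hfg0 h 2
    _ = (∫ x in Set.Ioo a b, f x ^ 2) * (∫ x in Set.Ioo a b, g x ^ 2) := by
        rw [mul_pow, ← Real.rpow_natCast (_ ^ _) 2, ← Real.rpow_natCast (_ ^ _) 2,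
          ← Real.rpow_mul hF0, ← Real.rpow_mul hG0]
        norm_num

/-- Inequality (4.22): for `u ≥ 0`, `v > 0` of class `C¹` on a bounded
interval and a cutoff `φ` with `0 ≤ φ ≤ 1` compactly supported in `I`,
`(∫ |(u^{(p+1)/2} v)_x| φ²)² ≤ ((p+1)²/2)(∫ v φ²)(∫ u^{p−1} v u_x² φ²)
  + 2 (∫ u^p v φ²)(∫ (u/v) v_x² φ²)`. -/
theorem stmt_16 (a b : ℝ) (hab : a < b) (p : ℝ) (hp : 2 ≤ p)
    (u u' v v' φ φ' : ℝ → ℝ)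
    (hu : ∀ x ∈ Set.Icc a b, HasDerivAt u (u' x) x)
    (hu'c : ContinuousOn u' (Set.Icc a b))
    (hunn : ∀ x ∈ Set.Icc a b, 0 ≤ u x)
    (hv : ∀ x ∈ Set.Icc a b, HasDerivAt v (v' x) x)
    (hv'c : ContinuousOn v' (Set.Icc a b))
    (hvpos : ∀ x ∈ Set.Icc a b, 0 < v x)
    (hφ : ∀ x : ℝ, HasDerivAt φ (φ' x) x)
    (hφ'c : Continuous φ')
    (hφsupp : tsupport φ ⊆ Set.Ioo a b)
    (hφ01 : ∀ x : ℝ, φ x ∈ Set.Icc (0:ℝ) 1) :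
    (∫ x in Set.Ioo a b,
        |deriv (fun y => u y ^ ((p+1)/2) * v y) x| * (φ x) ^ 2) ^ 2 ≤
      ((p+1) ^ 2 / 2) * (∫ x in Set.Ioo a b, v x * (φ x) ^ 2) *
          (∫ x in Set.Ioo a b, u x ^ (p-1) * v x * (u' x) ^ 2 * (φ x) ^ 2)
        + 2 * (∫ x in Set.Ioo a b, u x ^ p * v x * (φ x) ^ 2) *
          (∫ x in Set.Ioo a b, (u x / v x) * (v' x) ^ 2 * (φ x) ^ 2) := by
  have hsub : Set.Ioo a b ⊆ Set.Icc a b := Set.Ioo_subset_Icc_self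
  have hφ0 : ∀ x, 0 ≤ φ x := fun x => (hφ01 x).1
  have hφc : Continuous φ := continuous_iff_continuousAt.mpr fun x => (hφ x).continuousAt
  have hu_c : ContinuousOn u (Set.Icc a b) :=
    fun x hx => (hu x hx).continuousAt.continuousWithinAt
  have hv_c : ContinuousOn v (Set.Icc a b) :=
    fun x hx => (hv x hx).continuousAt.continuousWithinAt
  set c : ℝ := (p+1)/2 with hc
  have hc1 : (1:ℝ) ≤ c := by rw [hc]; linarith
  have hc0 : (0:ℝ) < c := by linarith
  -- the derivative
  set D : ℝ → ℝ := fun x => c * u x ^ (c-1) * u' x * v x + u x ^ c * v' x with hDdef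
  have hD : ∀ x ∈ Set.Icc a b, HasDerivAt (fun y => u y ^ c * v y) (D x) x := by
    intro x hx
    have h1 : HasDerivAt (fun y => u y ^ c) (c * u x ^ (c-1) * u' x) x := by
      have h := (Real.hasStrictDerivAt_rpow_const (x := u x) (p := c)
        (Or.inr hc1)).hasDerivAt.comp x (hu x hx)
      simpa [Function.comp_def, mul_assoc] using h
    simpa [hDdef, Pi.mul_def] using h1.mul (hv x hx)
  -- continuity helper for rpow powers of u
  have hur : ∀ r : ℝ, 0 ≤ r → ContinuousOn (fun x => u x ^ r) (Set.Icc a b) :=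
    fun r hr => hu_c.rpow_const (fun x _ => Or.inr hr)
  have hsc : ContinuousOn (fun x => Real.sqrt (v x)) (Set.Icc a b) :=
    Real.continuous_sqrt.comp_continuousOn hv_c
  -- the four Cauchy–Schwarz factors
  set F1 : ℝ → ℝ := fun x => Real.sqrt (v x) * φ x with hF1
  set G1 : ℝ → ℝ := fun x => u x ^ ((p-1)/2) * Real.sqrt (v x) * |u' x| * φ x with hG1
  set F2 : ℝ → ℝ := fun x => u x ^ (p/2) * Real.sqrt (v x) * φ x with hF2
  set G2 : ℝ → ℝ := fun x => u x ^ ((1:ℝ)/2) * |v' x| * (Real.sqrt (v x))⁻¹ * φ x with hG2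
  have hq0 : (0:ℝ) ≤ (p-1)/2 := by linarith
  have hF1c : ContinuousOn F1 (Set.Icc a b) := hsc.mul hφc.continuousOn
  have hG1c : ContinuousOn G1 (Set.Icc a b) :=
    (((hur _ hq0).mul hsc).mul hu'c.abs).mul hφc.continuousOn
  have hF2c : ContinuousOn F2 (Set.Icc a b) :=
    ((hur _ (by linarith)).mul hsc).mul hφc.continuousOn
  have hG2c : ContinuousOn G2 (Set.Icc a b) := by
    refine (((hur _ (by norm_num)).mul hv'c.abs).mul
      (hsc.inv₀ fun x hx => ?_)).mul hφc.continuousOn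
    exact Real.sqrt_ne_zero'.mpr (hvpos x hx)
  have hF10 : ∀ x ∈ Set.Icc a b, 0 ≤ F1 x :=
    fun x hx => mul_nonneg (Real.sqrt_nonneg _) (hφ0 x)
  have hG10 : ∀ x ∈ Set.Icc a b, 0 ≤ G1 x := fun x hx => by
    have h := Real.rpow_nonneg (hunn x hx) ((p-1)/2)
    have := hφ0 x
    have := Real.sqrt_nonneg (v x)
    simp only [hG1]
    positivity
  have hF20 : ∀ x ∈ Set.Icc a b, 0 ≤ F2 x := fun x hx => by
    have h := Real.rpow_nonneg (hunn x hx) (p/2)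
    have := hφ0 x
    have := Real.sqrt_nonneg (v x)
    simp only [hF2]
    positivity
  have hG20 : ∀ x ∈ Set.Icc a b, 0 ≤ G2 x := fun x hx => by
    have h := Real.rpow_nonneg (hunn x hx) ((1:ℝ)/2)
    have := hφ0 x
    have h2 : (0:ℝ) ≤ (Real.sqrt (v x))⁻¹ := inv_nonneg.mpr (Real.sqrt_nonneg _)
    simp only [hG2]
    positivity
  -- rewrite the left-hand integral
  have hLHS : (∫ x in Set.Ioo a b, |deriv (fun y => u y ^ c * v y) x| * (φ x) ^ 2)
      = ∫ x in Set.Ioo a b, |D x| * (φ x) ^ 2 := by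
    refine setIntegral_congr_fun measurableSet_Ioo fun x hx => ?_
    rw [(hD x (hsub hx)).deriv]
  rw [hLHS]
  -- pointwise bound
  have hpt : ∀ x ∈ Set.Icc a b, |D x| * (φ x) ^ 2 ≤ c * (F1 x * G1 x) + F2 x * G2 x := by
    intro x hx
    have hux := hunn x hx
    have hvx := hvpos x hx
    have hs : Real.sqrt (v x) * Real.sqrt (v x) = v x := Real.mul_self_sqrt hvx.le
    have hsne : Real.sqrt (v x) ≠ 0 := Real.sqrt_ne_zero'.mpr hvx
    have hcq : c - 1 = (p-1)/2 := by rw [hc]; ring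
    have hadd : u x ^ (p/2) * u x ^ ((1:ℝ)/2) = u x ^ c := by
      rw [hc, show (p+1)/2 = p/2 + 1/2 by ring,
        Real.rpow_add' hux (ne_of_gt (show (0:ℝ) < p/2 + 1/2 by linarith))]
    have e1 : F1 x * G1 x = u x ^ ((p-1)/2) * |u' x| * v x * φ x ^ 2 := by
      simp only [hF1, hG1]
      linear_combination (u x ^ ((p-1)/2) * |u' x| * φ x ^ 2) * hs
    have e2 : F2 x * G2 x = u x ^ c * |v' x| * φ x ^ 2 := by
      simp only [hF2, hG2]
      calc u x ^ (p/2) * Real.sqrt (v x) * φ x *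
            (u x ^ ((1:ℝ)/2) * |v' x| * (Real.sqrt (v x))⁻¹ * φ x)
          = (u x ^ (p/2) * u x ^ ((1:ℝ)/2)) * |v' x| * φ x ^ 2 *
              (Real.sqrt (v x) * (Real.sqrt (v x))⁻¹) := by ring
        _ = u x ^ c * |v' x| * φ x ^ 2 := by
            rw [mul_inv_cancel₀ hsne, hadd]; ring
    have habs : |D x| ≤ c * u x ^ ((p-1)/2) * |u' x| * v x + u x ^ c * |v' x| := by
      simp only [hDdef]
      refine (abs_add_le _ _).trans (le_of_eq ?_)
      rw [abs_mul, abs_mul, abs_mul, abs_mul, abs_of_nonneg hc0.le,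
        abs_of_nonneg (Real.rpow_nonneg hux _), abs_of_nonneg hvx.le,
        abs_of_nonneg (Real.rpow_nonneg hux _), hcq]
    calc |D x| * (φ x) ^ 2
        ≤ (c * u x ^ ((p-1)/2) * |u' x| * v x + u x ^ c * |v' x|) * (φ x) ^ 2 :=
          mul_le_mul_of_nonneg_right habs (sq_nonneg _)
      _ = c * (F1 x * G1 x) + F2 x * G2 x := by rw [e1, e2]; ring
  -- integrability
  have hDc : ContinuousOn D (Set.Icc a b) := by
    refine ContinuousOn.add ?_ ?_
    · exact ((continuousOn_const.mul (hur _ (by linarith))).mul hu'c).mul hv_c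
    · exact (hur _ hc0.le).mul hv'c
  have hint1 : IntegrableOn (fun x => |D x| * (φ x) ^ 2) (Set.Ioo a b) :=
    intOn_of_continuousOn' (hDc.abs.mul (hφc.pow 2).continuousOn)
  have i1 : IntegrableOn (fun x => F1 x * G1 x) (Set.Ioo a b) :=
    intOn_of_continuousOn' (hF1c.mul hG1c)
  have i2 : IntegrableOn (fun x => F2 x * G2 x) (Set.Ioo a b) :=
    intOn_of_continuousOn' (hF2c.mul hG2c)
  have hint2 : IntegrableOn (fun x => c * (F1 x * G1 x) + F2 x * G2 x) (Set.Ioo a b) :=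
    (i1.const_mul c).add i2
  -- integral bound
  have hI0 : (∫ x in Set.Ioo a b, |D x| * (φ x) ^ 2) ≤
      c * (∫ x in Set.Ioo a b, F1 x * G1 x) + ∫ x in Set.Ioo a b, F2 x * G2 x := by
    calc (∫ x in Set.Ioo a b, |D x| * (φ x) ^ 2)
        ≤ ∫ x in Set.Ioo a b, (c * (F1 x * G1 x) + F2 x * G2 x) :=
          setIntegral_mono_on hint1 hint2 measurableSet_Ioo fun x hx => hpt x (hsub hx)
      _ = _ := by rw [integral_add (i1.const_mul c) i2, integral_const_mul]
  -- Cauchy–Schwarz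
  have hCS1 := cs_sq' hF1c hG1c hF10 hG10
  have hCS2 := cs_sq' hF2c hG2c hF20 hG20
  -- identify the squares
  have eF1 : (∫ x in Set.Ioo a b, F1 x ^ 2) = ∫ x in Set.Ioo a b, v x * (φ x) ^ 2 := by
    refine setIntegral_congr_fun measurableSet_Ioo fun x hx => ?_
    simp only [hF1]
    rw [mul_pow, Real.sq_sqrt (hvpos x (hsub hx)).le]
  have eG1 : (∫ x in Set.Ioo a b, G1 x ^ 2)
      = ∫ x in Set.Ioo a b, u x ^ (p-1) * v x * (u' x) ^ 2 * (φ x) ^ 2 := by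
    refine setIntegral_congr_fun measurableSet_Ioo fun x hx => ?_
    have hux := hunn x (hsub hx)
    have hvx := hvpos x (hsub hx)
    have h1 : u x ^ ((p-1)/2) * u x ^ ((p-1)/2) = u x ^ (p-1) := by
      rw [← Real.rpow_add' hux (ne_of_gt (show (0:ℝ) < (p-1)/2 + (p-1)/2 by linarith))]
      congr 1; ring
    simp only [hG1]
    calc (u x ^ ((p-1)/2) * Real.sqrt (v x) * |u' x| * φ x) ^ 2
        = (u x ^ ((p-1)/2) * u x ^ ((p-1)/2)) * (Real.sqrt (v x) * Real.sqrt (v x)) *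
            (|u' x| * |u' x|) * (φ x * φ x) := by ring
      _ = u x ^ (p-1) * v x * (u' x) ^ 2 * (φ x) ^ 2 := by
          rw [h1, Real.mul_self_sqrt hvx.le, abs_mul_abs_self]; ring
  have eF2 : (∫ x in Set.Ioo a b, F2 x ^ 2)
      = ∫ x in Set.Ioo a b, u x ^ p * v x * (φ x) ^ 2 := by
    refine setIntegral_congr_fun measurableSet_Ioo fun x hx => ?_
    have hux := hunn x (hsub hx)
    have hvx := hvpos x (hsub hx)
    have h1 : u x ^ (p/2) * u x ^ (p/2) = u x ^ p := by
      rw [← Real.rpow_add' hux (ne_of_gt (show (0:ℝ) < p/2 + p/2 by linarith))]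
      congr 1; ring
    simp only [hF2]
    calc (u x ^ (p/2) * Real.sqrt (v x) * φ x) ^ 2
        = (u x ^ (p/2) * u x ^ (p/2)) * (Real.sqrt (v x) * Real.sqrt (v x)) *
            (φ x * φ x) := by ring
      _ = u x ^ p * v x * (φ x) ^ 2 := by
          rw [h1, Real.mul_self_sqrt hvx.le]; ring
  have eG2 : (∫ x in Set.Ioo a b, G2 x ^ 2)
      = ∫ x in Set.Ioo a b, (u x / v x) * (v' x) ^ 2 * (φ x) ^ 2 := by
    refine setIntegral_congr_fun measurableSet_Ioo fun x hx => ?_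
    have hux := hunn x (hsub hx)
    have hvx := hvpos x (hsub hx)
    have h1 : u x ^ ((1:ℝ)/2) * u x ^ ((1:ℝ)/2) = u x := by
      rw [← Real.rpow_add' hux (by norm_num)]
      norm_num
    simp only [hG2]
    calc (u x ^ ((1:ℝ)/2) * |v' x| * (Real.sqrt (v x))⁻¹ * φ x) ^ 2
        = (u x ^ ((1:ℝ)/2) * u x ^ ((1:ℝ)/2)) * (|v' x| * |v' x|) *
            (Real.sqrt (v x) * Real.sqrt (v x))⁻¹ * (φ x * φ x) := by ring
      _ = (u x / v x) * (v' x) ^ 2 * (φ x) ^ 2 := by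
          rw [h1, Real.mul_self_sqrt hvx.le, abs_mul_abs_self]
          field_simp
  rw [eF1, eG1] at hCS1
  rw [eF2, eG2] at hCS2
  -- final arithmetic
  have hA0 : 0 ≤ ∫ x in Set.Ioo a b, F1 x * G1 x := by
    refine integral_nonneg_of_ae ?_
    filter_upwards [ae_restrict_mem measurableSet_Ioo] with x hx
    exact mul_nonneg (hF10 x (hsub hx)) (hG10 x (hsub hx))
  have hB0 : 0 ≤ ∫ x in Set.Ioo a b, F2 x * G2 x := by
    refine integral_nonneg_of_ae ?_
    filter_upwards [ae_restrict_mem measurableSet_Ioo] with x hx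
    exact mul_nonneg (hF20 x (hsub hx)) (hG20 x (hsub hx))
  have hI00 : 0 ≤ ∫ x in Set.Ioo a b, |D x| * (φ x) ^ 2 :=
    integral_nonneg fun x => mul_nonneg (abs_nonneg _) (sq_nonneg _)
  have hsq : (∫ x in Set.Ioo a b, |D x| * (φ x) ^ 2) ^ 2 ≤
      (c * (∫ x in Set.Ioo a b, F1 x * G1 x) + ∫ x in Set.Ioo a b, F2 x * G2 x) ^ 2 :=
    pow_le_pow_left₀ hI00 hI0 2
  have h2c : (p+1) ^ 2 / 2 = 2 * c ^ 2 := by rw [hc]; ring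
  rw [h2c]
  set A := ∫ x in Set.Ioo a b, F1 x * G1 x
  set B := ∫ x in Set.Ioo a b, F2 x * G2 x
  nlinarith [hCS1, hCS2, hsq, sq_nonneg (c * A - B), hA0, hB0, hc0,
    mul_le_mul_of_nonneg_left hCS1 (show (0:ℝ) ≤ 2 * c ^ 2 by positivity),
    mul_le_mul_of_nonneg_left hCS2 (show (0:ℝ) ≤ (2:ℝ) by norm_num)]
end

section
/- Let I be a bounded interval, v ∈ C¹([0,T] × closure I) positive solving v_t = v_xx − u v classically with u ≥ 0 continuous and v_x = 0 on ∂I, and let φ ∈ C²_c(I), 0 ≤ φ ≤ 1. Then for all t, (d/dt) ∫_I ln(M/v) φ² + (1/2) ∫_I (v_x²/v²) φ² ≤ 2 ∫_I φ_x² + ∫_I u φ², where M is any constant with v ≤ M. -/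
open MeasureTheory

/-- Lemma 5.3-type estimate: if `v > 0` solves `v_t = v_xx − u v` classically
on `[0,T] × [a,b]` with `u ≥ 0` continuous and Neumann boundary conditions,
and `φ` is a `C²` cutoff compactly supported in `(a,b)` with `0 ≤ φ ≤ 1`, then
for every `t ∈ (0,T)`,
`(d/dt) ∫ ln(M/v) φ² + (1/2) ∫ (v_x²/v²) φ² ≤ 2 ∫ φ_x² + ∫ u φ²`
whenever `v ≤ M`. -/
theorem stmt_17 (a b T M : ℝ) (hab : a < b) (hT : 0 < T)
    (u v vx vxx : ℝ → ℝ → ℝ) (φ φ' φ'' : ℝ → ℝ)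
    (hu_cont : Continuous fun q : ℝ × ℝ => u q.1 q.2)
    (hu_nonneg : ∀ t x, 0 ≤ u t x)
    (hv_pos : ∀ t ∈ Set.Icc 0 T, ∀ x ∈ Set.Icc a b, 0 < v t x)
    (hv_le : ∀ t ∈ Set.Icc 0 T, ∀ x ∈ Set.Icc a b, v t x ≤ M)
    (hvx : ∀ t ∈ Set.Icc 0 T, ∀ x ∈ Set.Icc a b, HasDerivAt (fun y => v t y) (vx t x) x)
    (hvxx : ∀ t ∈ Set.Icc 0 T, ∀ x ∈ Set.Icc a b, HasDerivAt (fun y => vx t y) (vxx t x) x)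
    (hvxx_cont : Continuous fun q : ℝ × ℝ => vxx q.1 q.2)
    (hpde : ∀ t ∈ Set.Icc 0 T, ∀ x ∈ Set.Icc a b,
      HasDerivAt (fun s => v s x) (vxx t x - u t x * v t x) t)
    (hNeumann : ∀ t ∈ Set.Icc 0 T, vx t a = 0 ∧ vx t b = 0)
    (hφ : ∀ x : ℝ, HasDerivAt φ (φ' x) x)
    (hφ' : ∀ x : ℝ, HasDerivAt φ' (φ'' x) x)
    (hφ''c : Continuous φ'')
    (hφsupp : tsupport φ ⊆ Set.Ioo a b)
    (hφ01 : ∀ x : ℝ, φ x ∈ Set.Icc (0:ℝ) 1) :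
    ∀ t ∈ Set.Ioo 0 T,
      deriv (fun s => ∫ x in Set.Ioo a b, Real.log (M / v s x) * (φ x) ^ 2) t
          + (1/2) * (∫ x in Set.Ioo a b, (vx t x) ^ 2 / (v t x) ^ 2 * (φ x) ^ 2) ≤
        2 * (∫ x in Set.Ioo a b, (φ' x) ^ 2)
          + ∫ x in Set.Ioo a b, u t x * (φ x) ^ 2 := by
  intro t ht
  obtain ⟨ht0, htT⟩ := ht
  have htI : t ∈ Set.Icc (0:ℝ) T := ⟨ht0.le, htT.le⟩
  have hab' : a ≤ b := hab.le
  have hφc : Continuous φ := continuous_iff_continuousAt.2 fun x => (hφ x).continuousAt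
  have hφ'cont : Continuous φ' := continuous_iff_continuousAt.2 fun x => (hφ' x).continuousAt
  -- continuity of slices
  have hvcont : ∀ s ∈ Set.Icc (0:ℝ) T, ContinuousOn (fun x => v s x) (Set.Icc a b) :=
    fun s hs x hx => ((hvx s hs x hx).continuousAt).continuousWithinAt
  have hvxcont : ∀ s ∈ Set.Icc (0:ℝ) T, ContinuousOn (fun x => vx s x) (Set.Icc a b) :=
    fun s hs x hx => ((hvxx s hs x hx).continuousAt).continuousWithinAt
  have hu_t : Continuous (fun x => u t x) := hu_cont.comp (continuous_const.prodMk continuous_id)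
  have hvxx_t : Continuous (fun x => vxx t x) :=
    hvxx_cont.comp (continuous_const.prodMk continuous_id)
  -- compact bounds
  set K : Set (ℝ × ℝ) := Set.Icc (0:ℝ) T ×ˢ Set.Icc a b with hKdef
  have hKc : IsCompact K := isCompact_Icc.prod isCompact_Icc
  have htaK : (t, a) ∈ K := ⟨htI, Set.left_mem_Icc.2 hab'⟩
  obtain ⟨C1, hC1⟩ := hKc.exists_bound_of_continuousOn hvxx_cont.continuousOn
  obtain ⟨C2, hC2⟩ := hKc.exists_bound_of_continuousOn hu_cont.continuousOn
  have hC1' : ∀ s ∈ Set.Icc (0:ℝ) T, ∀ x ∈ Set.Icc a b, |vxx s x| ≤ C1 := by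
    intro s hs x hx
    have := hC1 (s, x) ⟨hs, hx⟩
    simpa [Real.norm_eq_abs] using this
  have hC2' : ∀ s ∈ Set.Icc (0:ℝ) T, ∀ x ∈ Set.Icc a b, u s x ≤ C2 := by
    intro s hs x hx
    have := hC2 (s, x) ⟨hs, hx⟩
    rw [Real.norm_eq_abs] at this
    exact (le_abs_self _).trans this
  have hC1nn : 0 ≤ C1 := le_trans (abs_nonneg _) (hC1' t htI a (Set.left_mem_Icc.2 hab'))
  have hC2nn : 0 ≤ C2 := le_trans (hu_nonneg t a) (hC2' t htI a (Set.left_mem_Icc.2 hab'))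
  have hM : 0 < M :=
    lt_of_lt_of_le (hv_pos 0 ⟨le_rfl, hT.le⟩ a ⟨le_rfl, hab'⟩)
      (hv_le 0 ⟨le_rfl, hT.le⟩ a ⟨le_rfl, hab'⟩)
  -- Lipschitz in time, uniformly in x
  set L : ℝ := C1 + C2 * M with hLdef
  have hLbound : ∀ s ∈ Set.Icc (0:ℝ) T, ∀ x ∈ Set.Icc a b,
      |vxx s x - u s x * v s x| ≤ L := by
    intro s hs x hx
    have h1 : |vxx s x| ≤ C1 := hC1' s hs x hx
    have h2 : |u s x * v s x| ≤ C2 * M := by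
      rw [abs_of_nonneg (mul_nonneg (hu_nonneg s x) (hv_pos s hs x hx).le)]
      exact mul_le_mul (hC2' s hs x hx) (hv_le s hs x hx) (hv_pos s hs x hx).le hC2nn
    calc |vxx s x - u s x * v s x| ≤ |vxx s x| + |u s x * v s x| := by
            rw [sub_eq_add_neg]; exact (abs_add_le _ _).trans (by rw [abs_neg])
      _ ≤ C1 + C2 * M := add_le_add h1 h2
  have hlip : ∀ x ∈ Set.Icc a b,
      LipschitzOnWith L.toNNReal (fun s => v s x) (Set.Icc (0:ℝ) T) := by
    intro x hx
    apply (convex_Icc (0:ℝ) T).lipschitzOnWith_of_nnnorm_hasDerivWithin_le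
      (f' := fun s => vxx s x - u s x * v s x)
      (fun s hs => (hpde s hs x hx).hasDerivWithinAt)
    intro s hs
    rw [← NNReal.coe_le_coe, coe_nnnorm, Real.coe_toNNReal', Real.norm_eq_abs]
    exact le_max_of_le_left (hLbound s hs x hx)
  have hvK : ContinuousOn (fun q : ℝ × ℝ => v q.1 q.2) K :=
    continuousOn_prod_of_continuousOn_lipschitzOnWith _ L.toNNReal hvcont hlip
  -- positive lower bound for v on K
  obtain ⟨q0, hq0K, hq0min⟩ := hKc.exists_isMinOn ⟨(t, a), htaK⟩ hvK
  set m : ℝ := v q0.1 q0.2 with hmdef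
  have hm : 0 < m := hv_pos q0.1 hq0K.1 q0.2 hq0K.2
  have hmle : ∀ s ∈ Set.Icc (0:ℝ) T, ∀ x ∈ Set.Icc a b, m ≤ v s x :=
    fun s hs x hx => hq0min (Set.mk_mem_prod hs hx)
  -- the ball around t
  set ε : ℝ := min t (T - t) with hεdef
  have hε : 0 < ε := lt_min ht0 (by linarith)
  have hball : Metric.ball t ε ⊆ Set.Ioo 0 T := by
    intro s hs
    rw [Metric.mem_ball, Real.dist_eq, abs_lt] at hs
    have h1 : ε ≤ t := min_le_left _ _
    have h2 : ε ≤ T - t := min_le_right _ _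
    exact ⟨by linarith [hs.1], by linarith [hs.2]⟩
  -- differentiation in time of the integrand
  have hFderiv : ∀ s ∈ Set.Ioo (0:ℝ) T, ∀ x ∈ Set.Icc a b,
      HasDerivAt (fun r => Real.log (M / v r x) * φ x ^ 2)
        ((u s x - vxx s x / v s x) * φ x ^ 2) s := by
    intro s hs x hx
    have hsI : s ∈ Set.Icc (0:ℝ) T := ⟨hs.1.le, hs.2.le⟩
    have hv0 : v s x ≠ 0 := (hv_pos s hsI x hx).ne'
    have hlog : HasDerivAt (fun r => Real.log (v r x))
        ((vxx s x - u s x * v s x) / v s x) s := (hpde s hsI x hx).log hv0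
    have h1 : HasDerivAt (fun r => (Real.log M - Real.log (v r x)) * φ x ^ 2)
        ((0 - (vxx s x - u s x * v s x) / v s x) * φ x ^ 2) s :=
      ((hasDerivAt_const s (Real.log M)).sub hlog).mul_const _
    have heq : (fun r => Real.log (M / v r x) * φ x ^ 2)
        =ᶠ[nhds s] (fun r => (Real.log M - Real.log (v r x)) * φ x ^ 2) := by
      filter_upwards [isOpen_Ioo.mem_nhds hs] with r hr
      rw [Real.log_div hM.ne' (hv_pos r ⟨hr.1.le, hr.2.le⟩ x hx).ne']
    have h2 := h1.congr_of_eventuallyEq heq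
    refine h2.congr_deriv ?_
    rw [zero_sub, sub_div, mul_div_cancel_right₀ _ hv0]
    ring
  -- integrability helper
  have hint : ∀ f : ℝ → ℝ, ContinuousOn f (Set.Icc a b) → IntegrableOn f (Set.Ioo a b) :=
    fun f hf => hf.integrableOn_Icc.mono_set Set.Ioo_subset_Icc_self
  have hFcont : ∀ s ∈ Set.Icc (0:ℝ) T,
      ContinuousOn (fun x => Real.log (M / v s x) * φ x ^ 2) (Set.Icc a b) := by
    intro s hs
    exact ((continuousOn_const.div (hvcont s hs) fun x hx => (hv_pos s hs x hx).ne').log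
      fun x hx => (div_pos hM (hv_pos s hs x hx)).ne').mul (hφc.pow 2).continuousOn
  have hF'cont : ContinuousOn (fun x => (u t x - vxx t x / v t x) * φ x ^ 2) (Set.Icc a b) :=
    ((hu_t.continuousOn.sub
      (hvxx_t.continuousOn.div (hvcont t htI) fun x hx => (hv_pos t htI x hx).ne')).mul
      (hφc.pow 2).continuousOn)
  -- derivative under the integral sign
  have main := hasDerivAt_integral_of_dominated_loc_of_deriv_le (μ := volume.restrict (Set.Ioo a b))
    (F := fun s x => Real.log (M / v s x) * φ x ^ 2)
    (F' := fun s x => (u s x - vxx s x / v s x) * φ x ^ 2)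
    (bound := fun _ => C2 + C1 / m) (x₀ := t) (Metric.ball_mem_nhds t hε)
    (by
      filter_upwards [isOpen_Ioo.mem_nhds (⟨ht0, htT⟩ : t ∈ Set.Ioo 0 T)] with s hs
      exact ((hFcont s ⟨hs.1.le, hs.2.le⟩).mono Set.Ioo_subset_Icc_self).aestronglyMeasurable
        measurableSet_Ioo)
    (hint _ (hFcont t htI))
    ((hF'cont.mono Set.Ioo_subset_Icc_self).aestronglyMeasurable measurableSet_Ioo)
    (by
      filter_upwards [ae_restrict_mem measurableSet_Ioo] with x hx
      intro s hs
      have hsI : s ∈ Set.Icc (0:ℝ) T := Set.Ioo_subset_Icc_self (hball hs)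
      have hxI : x ∈ Set.Icc a b := Set.Ioo_subset_Icc_self hx
      have hv0 := hv_pos s hsI x hxI
      have hA : |u s x - vxx s x / v s x| ≤ C2 + C1 / m := by
        have h1 : |u s x| ≤ C2 := by
          rw [abs_of_nonneg (hu_nonneg s x)]; exact hC2' s hsI x hxI
        have h2 : |vxx s x / v s x| ≤ C1 / m := by
          rw [abs_div, abs_of_pos hv0]
          exact div_le_div₀ hC1nn (hC1' s hsI x hxI) hm (hmle s hsI x hxI)
        calc |u s x - vxx s x / v s x| ≤ |u s x| + |vxx s x / v s x| := by
              rw [sub_eq_add_neg]; exact (abs_add_le _ _).trans (by rw [abs_neg])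
          _ ≤ C2 + C1 / m := add_le_add h1 h2
      have hφx : |φ x| ≤ 1 := by
        rw [abs_of_nonneg (hφ01 x).1]; exact (hφ01 x).2
      rw [Real.norm_eq_abs, abs_mul, abs_pow]
      calc |u s x - vxx s x / v s x| * |φ x| ^ 2 ≤ (C2 + C1 / m) * 1 := by
            apply mul_le_mul hA _ (by positivity) (by positivity)
            calc |φ x| ^ 2 ≤ 1 ^ 2 := by
                  exact pow_le_pow_left₀ (abs_nonneg _) hφx 2
              _ = 1 := one_pow 2
        _ = C2 + C1 / m := mul_one _
      )
    (integrableOn_const measure_Ioo_lt_top.ne)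
    (by
      filter_upwards [ae_restrict_mem measurableSet_Ioo] with x hx
      intro s hs
      exact hFderiv s (hball hs) x (Set.Ioo_subset_Icc_self hx))
  have hD : HasDerivAt (fun s => ∫ x in Set.Ioo a b, Real.log (M / v s x) * φ x ^ 2)
      (∫ x in Set.Ioo a b, (u t x - vxx t x / v t x) * φ x ^ 2) t := main.2
  rw [hD.deriv]
  -- integrability of the various integrands at time t
  have hv0' : ∀ x ∈ Set.Icc a b, v t x ≠ 0 := fun x hx => (hv_pos t htI x hx).ne'
  have hAcont : ContinuousOn (fun x => vxx t x / v t x * φ x ^ 2) (Set.Icc a b) :=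
    (hvxx_t.continuousOn.div (hvcont t htI) hv0').mul (hφc.pow 2).continuousOn
  have hBcont : ContinuousOn (fun x => vx t x ^ 2 / v t x ^ 2 * φ x ^ 2) (Set.Icc a b) :=
    (((hvxcont t htI).pow 2).div ((hvcont t htI).pow 2)
      fun x hx => pow_ne_zero 2 (hv0' x hx)).mul (hφc.pow 2).continuousOn
  have hCcont : ContinuousOn (fun x => vx t x / v t x * (2 * φ x * φ' x)) (Set.Icc a b) :=
    ((hvxcont t htI).div (hvcont t htI) hv0').mul
      ((continuous_const.mul hφc).mul hφ'cont).continuousOn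
  have hUcont : ContinuousOn (fun x => u t x * φ x ^ 2) (Set.Icc a b) :=
    hu_t.continuousOn.mul (hφc.pow 2).continuousOn
  have hintA := hint _ hAcont
  have hintB := hint _ hBcont
  have hintC := hint _ hCcont
  have hintU := hint _ hUcont
  have hintφ' : IntegrableOn (fun x => φ' x ^ 2) (Set.Ioo a b) :=
    hint _ (hφ'cont.pow 2).continuousOn
  -- integration by parts via FTC
  set g : ℝ → ℝ := fun y => vx t y / v t y * φ y ^ 2 with hgdef
  set g' : ℝ → ℝ := fun x =>
    (vxx t x * v t x - vx t x * vx t x) / v t x ^ 2 * φ x ^ 2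
      + vx t x / v t x * (2 * φ x * φ' x) with hg'def
  have hg : ∀ x ∈ Set.Icc a b, HasDerivAt g (g' x) x := by
    intro x hx
    have h := ((hvxx t htI x hx).div (hvx t htI x hx) (hv0' x hx)).mul ((hφ x).pow 2)
    refine h.congr_deriv ?_
    simp only [g', Pi.div_apply, Pi.pow_apply, Nat.cast_ofNat, show (2:ℕ) - 1 = 1 from rfl, pow_one]
  have hg'cont : ContinuousOn g' (Set.Icc a b) := by
    apply ContinuousOn.add
    · exact ((hvxx_t.continuousOn.mul (hvcont t htI)).sub
        ((hvxcont t htI).mul (hvxcont t htI))).div ((hvcont t htI).pow 2)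
        (fun x hx => pow_ne_zero 2 (hv0' x hx)) |>.mul (hφc.pow 2).continuousOn
    · exact ((hvxcont t htI).div (hvcont t htI) hv0').mul
        ((continuous_const.mul hφc).mul hφ'cont).continuousOn
  have hφa : φ a = 0 := by
    apply image_eq_zero_of_notMem_tsupport
    intro h
    exact lt_irrefl a (hφsupp h).1
  have hφb : φ b = 0 := by
    apply image_eq_zero_of_notMem_tsupport
    intro h
    exact lt_irrefl b (hφsupp h).2
  have hIBP : ∫ x in a..b, g' x = 0 := by
    rw [intervalIntegral.integral_eq_sub_of_hasDerivAt
      (fun x hx => hg x (by rwa [Set.uIcc_of_le hab'] at hx))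
      ((hg'cont.mono (by rw [Set.uIcc_of_le hab'])).intervalIntegrable)]
    simp [hgdef, hφa, hφb]
  have hIoo : ∫ x in Set.Ioo a b, g' x = 0 := by
    rw [← MeasureTheory.integral_Ioc_eq_integral_Ioo, ← intervalIntegral.integral_of_le hab']
    exact hIBP
  have hintg' : IntegrableOn g' (Set.Ioo a b) := hint _ hg'cont
  -- split the IBP identity
  have hsplit : (∫ x in Set.Ioo a b, vxx t x / v t x * φ x ^ 2)
      - (∫ x in Set.Ioo a b, vx t x ^ 2 / v t x ^ 2 * φ x ^ 2)
      + (∫ x in Set.Ioo a b, vx t x / v t x * (2 * φ x * φ' x)) = 0 := by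
    have h0 : ∫ x in Set.Ioo a b, (vxx t x / v t x * φ x ^ 2
        - vx t x ^ 2 / v t x ^ 2 * φ x ^ 2 + vx t x / v t x * (2 * φ x * φ' x)) = 0 := by
      rw [← hIoo]
      apply setIntegral_congr_fun measurableSet_Ioo
      intro x hx
      have hv0 : v t x ≠ 0 := hv0' x (Set.Ioo_subset_Icc_self hx)
      simp only [hg'def]
      field_simp
    have hintAB : IntegrableOn (fun x => vxx t x / v t x * φ x ^ 2
        - vx t x ^ 2 / v t x ^ 2 * φ x ^ 2) (Set.Ioo a b) := hintA.sub hintB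
    rw [integral_add hintAB hintC, integral_sub hintA hintB] at h0
    exact h0
  -- Young's inequality pointwise, integrated
  have hYoung : (∫ x in Set.Ioo a b, vx t x / v t x * (2 * φ x * φ' x))
      ≤ ∫ x in Set.Ioo a b,
          (1/2 * (vx t x ^ 2 / v t x ^ 2 * φ x ^ 2) + 2 * φ' x ^ 2) := by
    apply setIntegral_mono_on hintC ((hintB.const_mul _).add (hintφ'.const_mul _))
      measurableSet_Ioo
    intro x hx
    show vx t x / v t x * (2 * φ x * φ' x)
      ≤ 1/2 * (vx t x ^ 2 / v t x ^ 2 * φ x ^ 2) + 2 * φ' x ^ 2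
    have hdp : vx t x ^ 2 / v t x ^ 2 = (vx t x / v t x) ^ 2 := (div_pow _ _ _).symm
    rw [hdp]
    nlinarith [sq_nonneg (vx t x / v t x * φ x - 2 * φ' x)]
  have hYsplit : (∫ x in Set.Ioo a b,
        (1/2 * (vx t x ^ 2 / v t x ^ 2 * φ x ^ 2) + 2 * φ' x ^ 2))
      = 1/2 * (∫ x in Set.Ioo a b, vx t x ^ 2 / v t x ^ 2 * φ x ^ 2)
        + 2 * (∫ x in Set.Ioo a b, φ' x ^ 2) := by
    rw [integral_add (hintB.const_mul _) (hintφ'.const_mul _), integral_const_mul,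
      integral_const_mul]
  -- split the derivative integral
  have hD2 : (∫ x in Set.Ioo a b, (u t x - vxx t x / v t x) * φ x ^ 2)
      = (∫ x in Set.Ioo a b, u t x * φ x ^ 2)
        - ∫ x in Set.Ioo a b, vxx t x / v t x * φ x ^ 2 := by
    rw [← integral_sub hintU hintA]
    apply setIntegral_congr_fun measurableSet_Ioo
    intro x _
    ring
  rw [hD2]
  linarith [hsplit, hYoung.trans_eq hYsplit]
end
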